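/- For each n let ℙ_n and ℚ_n be probability distributions on a measurable space, let {χ_α : α ∈ S_n} be a finite family of real-valued functions that is orthonormal in L²(ℚ_n), let μ̂_α = E_{ℙ_n}[χ_α(Y)], and set P_n(Y) = Σ_{α ∈ S_n} μ̂_α χ_α(Y). If Σ_{α ∈ S_n} μ̂_α² → ∞ as n → ∞ and E_{ℙ_n}[P_n(Y)²] = (1 + o(1)) (E_{ℙ_n}[P_n(Y)])², then there exist thresholds t_n such that the tests f_n(Y) = 1{P_n(Y) ≥ t_n} satisfy ℙ_n[f_n(Y) = 1] → 1 and ℚ_n[f_n(Y) = 0] → 1; in particular (1/2)ℙ_n[f_n(Y)=1] + (1/2)ℚ_n[f_n(Y)=0] → 1 (strong detection). -/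

import Mathlib

open MeasureTheory Filter

noncomputable section
open scoped Classical

private lemma mul_integrable_of_memL2 {α : Type*} [MeasurableSpace α] {μ : Measure α}
    {f g : α → ℝ} (hf : MemLp f 2 μ) (hg : MemLp g 2 μ) :
    Integrable (fun y => f y * g y) μ := by
  have h1 := (hf.add hg).integrable_sq
  have h2 := hf.integrable_sq
  have h3 := hg.integrable_sq
  have heq : (fun y => f y * g y)
      = fun y => (((f y + g y) ^ 2 - f y ^ 2) - g y ^ 2) / 2 := by
    funext y; ring
  rw [heq]
  exact ((h1.sub h2).sub h3).div_const 2

/-- low-degree polynomial thresholding gives strong detection.  If the family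
`{χ_α}` is orthonormal under `ℚ_n`, the low-degree likelihood-ratio norm `Σ μ̂_α²` diverges,
and `P_n` concentrates under `ℙ_n` (second moment `(1+o(1))` times squared first moment),
then thresholding `P_n` distinguishes `ℙ_n` from `ℚ_n` with probability `1 − o(1)`. -/
theorem stmt_14
    (E : ℕ → Type) [∀ n, MeasurableSpace (E n)]
    (P Q : ∀ n, MeasureTheory.Measure (E n))
    (hP : ∀ n, IsProbabilityMeasure (P n)) (hQ : ∀ n, IsProbabilityMeasure (Q n))
    (ι : ℕ → Type) [∀ n, Fintype (ι n)]
    (χ : ∀ n, ι n → E n → ℝ)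
    (hmeas : ∀ n a, Measurable (χ n a))
    -- orthonormality in L²(ℚ_n)
    (horth : ∀ n (a b : ι n),
      (∫ y, χ n a y * χ n b y ∂Q n) = if a = b then (1 : ℝ) else 0)
    -- the Fourier coefficients of the likelihood ratio and the polynomial P_n
    (μhat : ∀ n, ι n → ℝ)
    (hμhat : ∀ n a, μhat n a = ∫ y, χ n a y ∂P n)
    (Ppoly : ∀ n, E n → ℝ)
    (hPpoly : ∀ n y, Ppoly n y = ∑ a : ι n, μhat n a * χ n a y)
    -- diverging low-degree likelihood ratio
    (hdiv : Tendsto (fun n => ∑ a : ι n, (μhat n a) ^ 2) atTop atTop)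
    -- concentration: E_ℙ[P²] = (1 + o(1)) (E_ℙ[P])²
    (err : ℕ → ℝ) (herr : Tendsto err atTop (nhds 0))
    (hconc : ∀ n, (∫ y, (Ppoly n y) ^ 2 ∂P n) = (1 + err n) * (∫ y, Ppoly n y ∂P n) ^ 2) :
    ∃ t : ℕ → ℝ,
      Tendsto (fun n => ((P n) {y | t n ≤ Ppoly n y}).toReal) atTop (nhds 1) ∧
      Tendsto (fun n => ((Q n) {y | Ppoly n y < t n}).toReal) atTop (nhds 1) ∧
      Tendsto (fun n =>
          (1 : ℝ) / 2 * ((P n) {y | t n ≤ Ppoly n y}).toReal +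
            (1 : ℝ) / 2 * ((Q n) {y | Ppoly n y < t n}).toReal) atTop (nhds 1) := by
  classical
  set m : ℕ → ℝ := fun n => ∑ a : ι n, (μhat n a) ^ 2 with hm
  set t : ℕ → ℝ := fun n => m n / 2 with ht
  -- basic facts
  have hPfun : ∀ n, Ppoly n = fun y => ∑ a : ι n, μhat n a * χ n a y :=
    fun n => funext (hPpoly n)
  have hPmeas : ∀ n, Measurable (Ppoly n) := by
    intro n
    rw [hPfun n]
    exact Finset.measurable_sum _ (fun a _ => (hmeas n a).const_mul _)
  have hms : ∀ n, MeasurableSet {y | t n ≤ Ppoly n y} :=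
    fun n => measurableSet_le measurable_const (hPmeas n)
  -- each term is integrable under P n
  have hterm : ∀ n (a : ι n), Integrable (fun y => μhat n a * χ n a y) (P n) := by
    intro n a
    by_cases h : Integrable (χ n a) (P n)
    · exact h.const_mul _
    · have h0 : μhat n a = 0 := by rw [hμhat]; exact integral_undef h
      simp [h0]
  have hIntP : ∀ n, Integrable (Ppoly n) (P n) := by
    intro n
    rw [hPfun n]
    exact integrable_finset_sum _ (fun a _ => hterm n a)
  have hEP : ∀ n, (∫ y, Ppoly n y ∂P n) = m n := by
    intro n
    have h1 : (∫ y, Ppoly n y ∂P n) = ∑ a : ι n, ∫ y, μhat n a * χ n a y ∂P n := by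
      rw [hPfun n]
      exact integral_finset_sum _ (fun a _ => hterm n a)
    rw [h1]
    refine Finset.sum_congr rfl (fun a _ => ?_)
    rw [integral_const_mul, ← hμhat, sq]
  -- χ's are in L²(Q n)
  have hχL2 : ∀ n (a : ι n), MemLp (χ n a) 2 (Q n) := by
    intro n a
    rw [memLp_two_iff_integrable_sq (hmeas n a).aestronglyMeasurable]
    by_contra h
    have h' : ¬ Integrable (fun y => χ n a y * χ n a y) (Q n) := by
      intro hi
      exact h (by simpa [pow_two] using hi)
    have := horth n a a
    rw [if_pos rfl, integral_undef h'] at this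
    norm_num at this
  have htermL2 : ∀ n (a : ι n), MemLp (fun y => μhat n a * χ n a y) 2 (Q n) :=
    fun n a => (hχL2 n a).const_mul _
  have hPL2Q : ∀ n, MemLp (Ppoly n) 2 (Q n) := by
    intro n
    rw [hPfun n]
    have h := memLp_finset_sum' (μ := Q n) Finset.univ (fun a _ => htermL2 n a)
    have heq : (∑ a : ι n, fun y => μhat n a * χ n a y)
        = fun y => ∑ a : ι n, μhat n a * χ n a y := by
      funext y; simp
    rwa [heq] at h
  -- second moment under Q n equals m n
  have hEQ2 : ∀ n, (∫ y, (Ppoly n y) ^ 2 ∂Q n) = m n := by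
    intro n
    have hprod : ∀ a b : ι n,
        Integrable (fun y => (μhat n a * χ n a y) * (μhat n b * χ n b y)) (Q n) :=
      fun a b => mul_integrable_of_memL2 (htermL2 n a) (htermL2 n b)
    have hsq : (fun y => (Ppoly n y) ^ 2)
        = fun y => ∑ a : ι n, ∑ b : ι n, (μhat n a * χ n a y) * (μhat n b * χ n b y) := by
      funext y
      rw [hPpoly, sq, Finset.sum_mul_sum]
    have hone : ∀ a b : ι n, (∫ y, (μhat n a * χ n a y) * (μhat n b * χ n b y) ∂Q n)
        = if a = b then μhat n a * μhat n b else 0 := by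
      intro a b
      have heq : (fun y => (μhat n a * χ n a y) * (μhat n b * χ n b y))
          = fun y => (μhat n a * μhat n b) * (χ n a y * χ n b y) := by
        funext y; ring
      rw [heq, integral_const_mul, horth n a b]
      split <;> simp
    calc (∫ y, (Ppoly n y) ^ 2 ∂Q n)
        = ∑ a : ι n, ∑ b : ι n, ∫ y, (μhat n a * χ n a y) * (μhat n b * χ n b y) ∂Q n := by
          rw [hsq, integral_finset_sum _
            (fun a _ => integrable_finset_sum _ (fun b _ => hprod a b))]
          exact Finset.sum_congr rfl
            (fun a _ => integral_finset_sum _ (fun b _ => hprod a b))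
      _ = ∑ a : ι n, (μhat n a) ^ 2 := by
          refine Finset.sum_congr rfl (fun a _ => ?_)
          rw [Finset.sum_congr rfl (fun b _ => hone a b)]
          simp [sq]
      _ = m n := rfl
  -- eventual facts
  have hmev : ∀ᶠ n in atTop, 2 ≤ m n := hdiv.eventually_ge_atTop 2
  have herr' : ∀ᶠ (n : ℕ) in atTop, |err n| < 1 / 2 := by
    have h := Metric.tendsto_atTop.mp herr (1 / 2) (by norm_num)
    obtain ⟨N, hN⟩ := h
    exact eventually_atTop.2 ⟨N, fun n hn => by simpa [Real.dist_eq] using hN n hn⟩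
  -- bound under Q: (Q n {t n ≤ Ppoly n}).toReal ≤ 4 / m n for m n ≥ 2
  have hQbound : ∀ n, 2 ≤ m n → ((Q n) {y | t n ≤ Ppoly n y}).toReal ≤ 4 / m n := by
    intro n hmn
    have ht0 : 0 < t n := by simp only [ht]; linarith
    have hsub : {y | t n ≤ Ppoly n y} ⊆ {y | (t n) ^ 2 ≤ (Ppoly n y) ^ 2} := by
      intro y hy
      exact pow_le_pow_left₀ ht0.le hy 2
    have hmono : ((Q n) {y | t n ≤ Ppoly n y}).toReal
        ≤ ((Q n) {y | (t n) ^ 2 ≤ (Ppoly n y) ^ 2}).toReal :=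
      ENNReal.toReal_mono (measure_ne_top _ _) (measure_mono hsub)
    have hmark := mul_meas_ge_le_integral_of_nonneg
      (ae_of_all _ (fun y => sq_nonneg (Ppoly n y)))
      ((hPL2Q n).integrable_sq) ((t n) ^ 2)
    rw [hEQ2 n] at hmark
    have ht2 : (0 : ℝ) < (t n) ^ 2 := by positivity
    have h1 : ((Q n) {y | (t n) ^ 2 ≤ (Ppoly n y) ^ 2}).toReal ≤ m n / (t n) ^ 2 := by
      rw [le_div_iff₀ ht2]
      rw [measureReal_def] at hmark
      linarith [hmark]
    have hmpos : (0 : ℝ) < m n := by linarith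
    have hm2 : (0 : ℝ) < m n ^ 2 := by positivity
    have h2 : m n / (t n) ^ 2 = 4 / m n := by
      have h4 : (t n) ^ 2 = m n ^ 2 / 4 := by simp only [ht]; ring
      rw [h4, div_div_eq_mul_div, div_eq_div_iff hm2.ne' hmpos.ne']
      ring
    linarith [hmono, h1, h2 ▸ h1]
  -- bound under P: (P n {Ppoly n < t n}).toReal ≤ 4 * |err n| eventually
  have hPbound : ∀ n, 2 ≤ m n → |err n| < 1 / 2 →
      ((P n) {y | Ppoly n y < t n}).toReal ≤ 4 * |err n| := by
    intro n hmn hen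
    -- integrability of the square under P n
    have hint2 : Integrable (fun y => (Ppoly n y) ^ 2) (P n) := by
      by_contra h
      have h0 := hconc n
      rw [integral_undef h, hEP n] at h0
      have hpos : (0 : ℝ) < 1 + err n := by
        rcases abs_lt.mp hen with ⟨h1, h2⟩; linarith
      have hm2 : (0 : ℝ) < m n ^ 2 := by nlinarith
      have := mul_pos hpos hm2
      linarith
    have hL2 : MemLp (Ppoly n) 2 (P n) :=
      (memLp_two_iff_integrable_sq (hPmeas n).aestronglyMeasurable).2 hint2
    have hvar : ProbabilityTheory.variance (Ppoly n) (P n) = err n * m n ^ 2 := by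
      rw [ProbabilityTheory.variance_eq_sub hL2]
      have h2 : (∫ y, (Ppoly n) y ^ 2 ∂P n) = (1 + err n) * m n ^ 2 := by
        rw [← hEP n]; exact hconc n
      simp only [Pi.pow_apply] at *
      rw [h2, hEP n]
      ring
    have hcheb := ProbabilityTheory.meas_ge_le_variance_div_sq (μ := P n) hL2
      (c := m n / 2) (by linarith)
    have hsub : {y | Ppoly n y < t n} ⊆ {y | m n / 2 ≤ |Ppoly n y - ∫ x, Ppoly n x ∂P n|} := by
      intro y hy
      simp only [Set.mem_setOf_eq] at hy ⊢
      rw [hEP n]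
      rw [abs_sub_comm, abs_of_nonneg (by simp only [ht] at hy; linarith)]
      simp only [ht] at hy
      linarith
    have hle : (P n) {y | Ppoly n y < t n}
        ≤ ENNReal.ofReal (ProbabilityTheory.variance (Ppoly n) (P n) / (m n / 2) ^ 2) :=
      le_trans (measure_mono hsub) hcheb
    have hm2 : (0 : ℝ) < m n ^ 2 := by nlinarith
    have herrnn : 0 ≤ err n := by
      have hv := ProbabilityTheory.variance_nonneg (Ppoly n) (P n)
      rw [hvar] at hv
      nlinarith [hv, hm2]
    have hxnn : 0 ≤ ProbabilityTheory.variance (Ppoly n) (P n) / (m n / 2) ^ 2 := by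
      rw [hvar]; positivity
    have htr : ((P n) {y | Ppoly n y < t n}).toReal
        ≤ ProbabilityTheory.variance (Ppoly n) (P n) / (m n / 2) ^ 2 := by
      have h1 := ENNReal.toReal_mono ENNReal.ofReal_ne_top hle
      rwa [ENNReal.toReal_ofReal hxnn] at h1
    rw [hvar] at htr
    have hd : err n * m n ^ 2 / (m n / 2) ^ 2 = 4 * err n := by
      have h4 : (m n / 2) ^ 2 = m n ^ 2 / 4 := by ring
      rw [h4, div_div_eq_mul_div, mul_comm (err n * m n ^ 2) 4, mul_div_assoc,
        mul_div_assoc, div_self (ne_of_gt hm2), mul_one]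
    rw [hd] at htr
    calc ((P n) {y | Ppoly n y < t n}).toReal ≤ 4 * err n := htr
      _ ≤ 4 * |err n| := by have := le_abs_self (err n); linarith
  -- complements
  have hPcompl : ∀ n, ((P n) {y | t n ≤ Ppoly n y}).toReal
      = 1 - ((P n) {y | Ppoly n y < t n}).toReal := by
    intro n
    have hc : {y | Ppoly n y < t n} = {y | t n ≤ Ppoly n y}ᶜ := by
      ext y; simp [not_le]
    rw [hc, measure_compl (hms n) (measure_ne_top _ _), measure_univ,
      ENNReal.toReal_sub_of_le prob_le_one (by simp)]
    simp
  have hQcompl : ∀ n, ((Q n) {y | Ppoly n y < t n}).toReal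
      = 1 - ((Q n) {y | t n ≤ Ppoly n y}).toReal := by
    intro n
    have hc : {y | Ppoly n y < t n} = {y | t n ≤ Ppoly n y}ᶜ := by
      ext y; simp [not_le]
    rw [hc, measure_compl (hms n) (measure_ne_top _ _), measure_univ,
      ENNReal.toReal_sub_of_le prob_le_one (by simp)]
    simp
  -- the small quantities tend to 0
  have hQsmall : Tendsto (fun n => ((Q n) {y | t n ≤ Ppoly n y}).toReal) atTop (nhds 0) := by
    have hup : Tendsto (fun n => 4 / m n) atTop (nhds 0) :=
      Tendsto.div_atTop (tendsto_const_nhds (x := (4 : ℝ))) hdiv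
    refine tendsto_of_tendsto_of_tendsto_of_le_of_le' tendsto_const_nhds hup ?_ ?_
    · exact Eventually.of_forall (fun n => ENNReal.toReal_nonneg)
    · exact hmev.mono (fun n hn => hQbound n hn)
  have hPsmall : Tendsto (fun n => ((P n) {y | Ppoly n y < t n}).toReal) atTop (nhds 0) := by
    have habs : Tendsto (fun n => 4 * |err n|) atTop (nhds 0) := by
      have := (herr.abs).const_mul (4 : ℝ)
      simpa using this
    refine tendsto_of_tendsto_of_tendsto_of_le_of_le' tendsto_const_nhds habs ?_ ?_
    · exact Eventually.of_forall (fun n => ENNReal.toReal_nonneg)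
    · filter_upwards [hmev, herr'] with n h1 h2
      exact hPbound n h1 h2
  have hP1 : Tendsto (fun n => ((P n) {y | t n ≤ Ppoly n y}).toReal) atTop (nhds 1) := by
    have : Tendsto (fun n => 1 - ((P n) {y | Ppoly n y < t n}).toReal) atTop (nhds 1) := by
      have := (tendsto_const_nhds : Tendsto (fun _ : ℕ => (1:ℝ)) atTop (nhds 1)).sub hPsmall
      simpa using this
    exact this.congr (fun n => (hPcompl n).symm)
  have hQ1 : Tendsto (fun n => ((Q n) {y | Ppoly n y < t n}).toReal) atTop (nhds 1) := by
    have : Tendsto (fun n => 1 - ((Q n) {y | t n ≤ Ppoly n y}).toReal) atTop (nhds 1) := by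
      have := (tendsto_const_nhds : Tendsto (fun _ : ℕ => (1:ℝ)) atTop (nhds 1)).sub hQsmall
      simpa using this
    exact this.congr (fun n => (hQcompl n).symm)
  refine ⟨t, hP1, hQ1, ?_⟩
  have := (hP1.const_mul ((1 : ℝ) / 2)).add (hQ1.const_mul ((1 : ℝ) / 2))
  norm_num at this
  convert this using 2

end
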